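/- arXiv:2205.09896 — 4 statements merged into one kernel-verified Lean document; each statement's English description precedes it below -/
import Mathlib

section
/- Let R be a commutative ring, M a finitely generated projective R-module, and f a polynomial law from M to R such that f_R(0) = 0. If m ∈ M satisfies f_R(m) ∈ R^×, then m is unimodular. -/
/-!
STATEMENT 0: Let R be a commutative ring, M a finitely generated projective R-module,
and f a polynomial law from M to R such that f_R(0) = 0.  If m ∈ M satisfies
f_R(m) ∈ R^×, then m is unimodular.
-/

open TensorProduct

universe u

/-- A polynomial law (in the sense of Roby) from `M` to `N`:
a family of functions `S ⊗[R] M → S ⊗[R] N`, one for each commutative `R`-algebra `S`,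
natural in `S`. -/
structure PolyLaw (R : Type u) [CommRing R] (M N : Type u)
    [AddCommGroup M] [Module R M] [AddCommGroup N] [Module R N] : Type (u + 1) where
  toFun : ∀ (S : Type u) [CommRing S] [Algebra R S], S ⊗[R] M → S ⊗[R] N
  isCompat : ∀ (S S' : Type u) [CommRing S] [Algebra R S] [CommRing S'] [Algebra R S']
      (φ : S →ₐ[R] S') (x : S ⊗[R] M),
      LinearMap.rTensor N φ.toLinearMap (toFun S x) =
        toFun S' (LinearMap.rTensor M φ.toLinearMap x)

/-- The value of a polynomial law over the base ring `R` itself, viewed as a function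
`M → N` via the canonical identifications `R ⊗[R] M ≅ M` and `R ⊗[R] N ≅ N`. -/
noncomputable def PolyLaw.ground {R : Type u} [CommRing R] {M N : Type u}
    [AddCommGroup M] [Module R M] [AddCommGroup N] [Module R N]
    (f : PolyLaw R M N) (m : M) : N :=
  TensorProduct.lid R N (f.toFun R ((TensorProduct.lid R M).symm m))

theorem stmt_0 (R : Type u) [CommRing R] (M : Type u) [AddCommGroup M] [Module R M]
    [Module.Finite R M] [Module.Projective R M]
    (f : PolyLaw R M R) (h0 : f.ground 0 = 0)
    (m : M) (hm : IsUnit (f.ground m)) :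
    ∃ lam : M →ₗ[R] R, lam m = 1 := by
  by_contra hc
  push_neg at hc
  -- the ideal of values λ(m)
  set I : Ideal R := LinearMap.range (Module.Dual.eval R M m) with hI
  have hItop : I ≠ ⊤ := by
    intro htop
    have : (1 : R) ∈ I := htop ▸ Submodule.mem_top
    obtain ⟨lam, hlam⟩ := this
    exact hc lam hlam
  obtain ⟨𝔪, h𝔪max, h𝔪⟩ := Ideal.exists_le_maximal I hItop
  -- m ∈ 𝔪 • ⊤
  obtain ⟨n, p, i, hsurj, hinj, hpi⟩ := Module.Finite.exists_comp_eq_id_of_projective R M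
  have hm𝔪 : m ∈ 𝔪 • (⊤ : Submodule R M) := by
    have hiexp : (i m) = ∑ j : Fin n, (i m j) • (Pi.single j 1 : Fin n → R) := by
      ext k
      simp [Pi.single_apply, eq_comm]
    have hmrep : m = ∑ j : Fin n, (i m j) • p (Pi.single j 1) := by
      conv_lhs => rw [← LinearMap.id_apply (R := R) m, ← hpi, LinearMap.comp_apply, hiexp]
      rw [map_sum]
      simp only [map_smul]
    rw [hmrep]
    refine Submodule.sum_mem _ fun j _ => Submodule.smul_mem_smul ?_ Submodule.mem_top
    apply h𝔪
    exact ⟨(LinearMap.proj j).comp i, rfl⟩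
  -- pass to the residue field
  let k := R ⧸ 𝔪
  let φ : R →ₐ[R] k := Ideal.Quotient.mkₐ R 𝔪
  -- the image of m in k ⊗ M is zero
  have htens : ∀ x ∈ 𝔪 • (⊤ : Submodule R M), ((1 : k) ⊗ₜ[R] x : k ⊗[R] M) = 0 := by
    intro x hx
    refine Submodule.smul_induction_on hx ?_ ?_
    · intro r hr y _
      rw [tmul_smul, smul_tmul']
      have : r • (1 : k) = Ideal.Quotient.mk 𝔪 r := by
        rw [← Algebra.algebraMap_eq_smul_one]; rfl
      rw [this, Ideal.Quotient.eq_zero_iff_mem.mpr hr, zero_tmul]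
    · intro y z hy hz
      rw [tmul_add, hy, hz, add_zero]
  have hzero : LinearMap.rTensor M φ.toLinearMap ((TensorProduct.lid R M).symm m) = 0 := by
    have : (TensorProduct.lid R M).symm m = (1 : R) ⊗ₜ[R] m := rfl
    rw [this, LinearMap.rTensor_tmul, AlgHom.toLinearMap_apply, map_one]
    exact htens m hm𝔪
  -- f over R sends 0 to 0
  have hf0 : f.toFun R (0 : R ⊗[R] M) = 0 := by
    have := h0
    unfold PolyLaw.ground at this
    rw [map_zero] at this
    exact (EmbeddingLike.map_eq_zero_iff (f := TensorProduct.lid R R)).mp this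
  -- f over k sends 0 to 0
  have hfk0 : f.toFun k (0 : k ⊗[R] M) = 0 := by
    have := f.isCompat R k φ 0
    rw [hf0, map_zero, map_zero] at this
    exact this.symm
  -- naturality at m
  have hnat := f.isCompat R k φ ((TensorProduct.lid R M).symm m)
  rw [hzero, hfk0] at hnat
  -- compute the left-hand side
  have hfm : f.toFun R ((TensorProduct.lid R M).symm m) = (1 : R) ⊗ₜ[R] f.ground m := by
    have : f.toFun R ((TensorProduct.lid R M).symm m) =
        (TensorProduct.lid R R).symm (f.ground m) := by
      unfold PolyLaw.ground
      rw [LinearEquiv.symm_apply_apply]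
    rw [this]; rfl
  rw [hfm, LinearMap.rTensor_tmul, AlgHom.toLinearMap_apply, map_one] at hnat
  -- hence f.ground m maps to 0 in k
  have : Ideal.Quotient.mk 𝔪 (f.ground m) = 0 := by
    have h2 := congrArg (TensorProduct.rid R k) hnat
    rw [map_zero, TensorProduct.rid_tmul] at h2
    rw [← h2, ← Algebra.algebraMap_eq_smul_one]; rfl
  have hmem : f.ground m ∈ 𝔪 := Ideal.Quotient.eq_zero_iff_mem.mp this
  exact h𝔪max.ne_top (𝔪.eq_top_of_isUnit_mem hmem hm)
end

section
/- Let R be a commutative ring, M and N R-modules, A a unital associative R-algebra, and g a polynomial law from M to A such that there exists m ∈ M with g_R(m) invertible in A. Let d ≥ 0 and let f be a polynomial law from M to N that is homogeneous of degree d and satisfies: for every commutative R-algebra S and every x ∈ M ⊗_R S, if g_S(x) is invertible in A ⊗_R S then f_S(x) = 0. Then f is identically zero. -/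
/-!
STATEMENT 2: Let R be a commutative ring, M and N R-modules, A a unital associative
R-algebra, and g a polynomial law from M to A such that there exists m ∈ M with g_R(m)
invertible in A.  Let d ≥ 0 and let f be a polynomial law from M to N that is
homogeneous of degree d and satisfies: for every commutative R-algebra S and every
x ∈ M ⊗_R S, if g_S(x) is invertible in A ⊗_R S then f_S(x) = 0.  Then f is
identically zero.
-/

open TensorProduct

universe u

/-- Homogeneity of degree `d` of a polynomial law. -/
def PolyLaw.IsHomogeneous {R : Type u} [CommRing R] {M N : Type u}
    [AddCommGroup M] [Module R M] [AddCommGroup N] [Module R N]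
    (d : ℕ) (f : PolyLaw R M N) : Prop :=
  ∀ (S : Type u) [CommRing S] [Algebra R S] (s : S) (x : S ⊗[R] M),
    f.toFun S (s • x) = s ^ d • f.toFun S x

section Helpers

variable {R : Type u} [CommRing R] {M : Type u} [AddCommGroup M] [Module R M]
variable {S S' : Type u} [CommRing S] [Algebra R S] [CommRing S'] [Algebra R S']

lemma rTensor_algHom_smul (φ : S →ₐ[R] S') (p : S) (w : S ⊗[R] M) :
    LinearMap.rTensor M φ.toLinearMap (p • w) = φ p • LinearMap.rTensor M φ.toLinearMap w := by
  induction w using TensorProduct.induction_on with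
  | zero => simp
  | tmul s mm => simp [TensorProduct.smul_tmul', smul_eq_mul, map_mul]
  | add y z hy hz => simp [smul_add, map_add, hy, hz]

lemma smul_eq_rTensor_mulLeft (c : S) (w : S ⊗[R] M) :
    c • w = LinearMap.rTensor M (LinearMap.mulLeft R c) w := by
  induction w using TensorProduct.induction_on with
  | zero => simp
  | tmul s mm => simp [TensorProduct.smul_tmul', smul_eq_mul]
  | add y z hy hz => simp [smul_add, hy, hz]

lemma eq_smul_of_rTensor_eq_zero (φ : S →ₐ[R] S') (c : S)
    (hker : ∀ y : S, φ y = 0 ↔ ∃ z, c * z = y) (hsurj : Function.Surjective ⇑φ.toLinearMap)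
    (w : S ⊗[R] M) (hw : LinearMap.rTensor M φ.toLinearMap w = 0) : ∃ v, w = c • v := by
  have hex : Function.Exact (LinearMap.mulLeft R c) φ.toLinearMap := by
    intro y; simpa [Set.mem_range] using (hker y)
  obtain ⟨v, hv⟩ := (rTensor_exact (R := R) M hex hsurj w).mp hw
  exact ⟨v, by rw [← hv, ← smul_eq_rTensor_mulLeft]⟩

lemma isUnit_add_central_mul {B : Type u} [Ring B] {u : B} (hu : IsUnit u)
    (c v : B) (hc : ∀ b : B, c * b = b * c) (hk : ∃ k : ℕ, c ^ k = 0) :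
    IsUnit (u + c * v) := by
  obtain ⟨uu, rfl⟩ := hu
  set v' : B := (↑uu⁻¹ : B) * v with hv'
  have hcom : Commute c v' := hc v'
  have hn : IsNilpotent (c * v') := by
    obtain ⟨k, hk0⟩ := hk
    exact ⟨k, by rw [hcom.mul_pow, hk0, zero_mul]⟩
  have h1 : IsUnit (1 + c * v') := hn.isUnit_one_add
  have key : (uu : B) + c * v = (uu : B) * (1 + c * v') := by
    rw [mul_add, mul_one]
    congr 1
    refine Eq.symm ?_
    calc (uu : B) * (c * v') = ((uu : B) * c) * v' := (mul_assoc _ _ _).symm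
      _ = (c * (uu : B)) * v' := by rw [hc]
      _ = c * ((uu : B) * ((↑uu⁻¹ : B) * v)) := by rw [mul_assoc, hv']
      _ = c * v := by rw [Units.mul_inv_cancel_left]
  rw [key]
  exact uu.isUnit.mul h1

end Helpers

noncomputable def coeffL (R : Type u) [CommRing R] (S : Type u) [CommRing S] [Algebra R S]
    (k : ℤ) : LaurentPolynomial S →ₗ[R] S :=
  LinearMap.restrictScalars R
    ((Finsupp.lapply k : (ℤ →₀ S) →ₗ[S] S) ∘ₗ
      (AddMonoidAlgebra.coeffLinearEquiv S : LaurentPolynomial S ≃ₗ[S] (ℤ →₀ S)).toLinearMap)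

@[simp] lemma coeffL_apply (R : Type u) [CommRing R] (S : Type u) [CommRing S] [Algebra R S]
    (k : ℤ) (l : LaurentPolynomial S) : coeffL R S k l = l.coeff k := rfl

lemma single_mul_apply' {S : Type u} [CommRing S] (n k : ℤ) (l : AddMonoidAlgebra S ℤ) :
    (AddMonoidAlgebra.single n (1 : S) * l).coeff k = l.coeff (k - n) := by
  rw [AddMonoidAlgebra.coeff_single_mul_apply, one_mul]
  congr 1
  omega

section Comp

variable {R : Type u} [CommRing R] {M : Type u} [AddCommGroup M] [Module R M]

lemma rTensor_rTensor_algHom {S S₁ S₂ : Type u} [CommRing S] [Algebra R S]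
    [CommRing S₁] [Algebra R S₁] [CommRing S₂] [Algebra R S₂]
    (φ : S₁ →ₐ[R] S₂) (ψ₁ : S →ₐ[R] S₁) (ψ₂ : S →ₐ[R] S₂)
    (h : ∀ s : S, φ (ψ₁ s) = ψ₂ s) (y : S ⊗[R] M) :
    LinearMap.rTensor M φ.toLinearMap (LinearMap.rTensor M ψ₁.toLinearMap y)
      = LinearMap.rTensor M ψ₂.toLinearMap y := by
  rw [← LinearMap.comp_apply, ← LinearMap.rTensor_comp]
  congr 1
  exact congrArg (LinearMap.rTensor M) (LinearMap.ext h)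

end Comp

section Key

variable {R : Type u} [CommRing R] {M N : Type u}
    [AddCommGroup M] [Module R M] [AddCommGroup N] [Module R N]
variable {S : Type u} [CommRing S] [Algebra R S]

lemma key_coeff (f : PolyLaw R M N) (d : ℕ) (hf : f.IsHomogeneous d)
    (x a : S ⊗[R] M) :
    f.toFun S x = LinearMap.rTensor N (LinearMap.restrictScalars R (Polynomial.lcoeff S d))
      (f.toFun (Polynomial S)
        ((Polynomial.X : Polynomial S) •
            LinearMap.rTensor M (IsScalarTower.toAlgHom R S (Polynomial S)).toLinearMap x
          + LinearMap.rTensor M (IsScalarTower.toAlgHom R S (Polynomial S)).toLinearMap a)) := by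
  set CP : S →ₐ[R] Polynomial S := IsScalarTower.toAlgHom R S (Polynomial S) with hCP
  set CL : S →ₐ[R] LaurentPolynomial S := IsScalarTower.toAlgHom R S (LaurentPolynomial S) with hCL
  set j : Polynomial S →ₐ[R] LaurentPolynomial S :=
    (Polynomial.toLaurentAlg : Polynomial S →ₐ[S] LaurentPolynomial S).restrictScalars R with hj
  set iv : LaurentPolynomial S →ₐ[R] LaurentPolynomial S :=
    ((LaurentPolynomial.invert : LaurentPolynomial S ≃ₐ[S] LaurentPolynomial S).toAlgHom).restrictScalars R with hiv
  set ε : Polynomial S →ₐ[R] S :=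
    ((Polynomial.aeval (0 : S) : Polynomial S →ₐ[S] S)).restrictScalars R with hε
  set G : Polynomial S ⊗[R] N := f.toFun (Polynomial S)
      ((Polynomial.X : Polynomial S) • LinearMap.rTensor M CP.toLinearMap x
        + LinearMap.rTensor M CP.toLinearMap a) with hG
  set H0 : Polynomial S ⊗[R] N := f.toFun (Polynomial S)
      (LinearMap.rTensor M CP.toLinearMap x
        + (Polynomial.X : Polynomial S) • LinearMap.rTensor M CP.toLinearMap a) with hH0
  -- Step 0 : evaluation of H0 at X = 0 recovers f x
  have hεX : ε (Polynomial.X : Polynomial S) = 0 := by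
    simp [hε]
  have hεC : ∀ s : S, ε (CP s) = s := by
    intro s
    simp [hε, hCP, IsScalarTower.toAlgHom_apply, Polynomial.algebraMap_eq]
  have he0 : LinearMap.rTensor N ε.toLinearMap H0 = f.toFun S x := by
    rw [hH0, f.isCompat (Polynomial S) S ε]
    congr 1
    rw [map_add, rTensor_algHom_smul, hεX, zero_smul, add_zero]
    rw [rTensor_rTensor_algHom (R := R) ε CP (AlgHom.id R S) hεC x]
    rw [show (AlgHom.id R S).toLinearMap = LinearMap.id from rfl, LinearMap.rTensor_id,
      LinearMap.id_apply]
  -- images of CP under j and iv.comp j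
  have hjC : ∀ s : S, j (CP s) = CL s := by
    intro s
    simp [hj, hCP, hCL, IsScalarTower.toAlgHom_apply]
  have hivjC : ∀ s : S, (iv.comp j) (CP s) = CL s := by
    intro s
    simp [hj, hiv, hCP, hCL, IsScalarTower.toAlgHom_apply]
  have hjX : j (Polynomial.X : Polynomial S) = LaurentPolynomial.T 1 := by
    simp [hj]
  have hivjX : (iv.comp j) (Polynomial.X : Polynomial S) = LaurentPolynomial.T (-1) := by
    simp [hj, hiv]
  -- Step 1 : homogeneity relates the images of G and H0 in Laurent polynomials
  have he1 : LinearMap.rTensor N j.toLinearMap G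
      = (LaurentPolynomial.T 1 : LaurentPolynomial S) ^ d •
          f.toFun (LaurentPolynomial S)
            (LinearMap.rTensor M CL.toLinearMap x
              + (LaurentPolynomial.T (-1) : LaurentPolynomial S) • LinearMap.rTensor M CL.toLinearMap a) := by
    rw [hG, f.isCompat (Polynomial S) (LaurentPolynomial S) j]
    rw [map_add, rTensor_algHom_smul, hjX,
      rTensor_rTensor_algHom (R := R) j CP CL hjC x,
      rTensor_rTensor_algHom (R := R) j CP CL hjC a]
    rw [← hf (LaurentPolynomial S) (LaurentPolynomial.T 1 : LaurentPolynomial S)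
      (LinearMap.rTensor M CL.toLinearMap x
        + (LaurentPolynomial.T (-1) : LaurentPolynomial S) • LinearMap.rTensor M CL.toLinearMap a)]
    congr 1
    rw [smul_add, smul_smul, ← LaurentPolynomial.T_add]
    norm_num
  have he2 : LinearMap.rTensor N (iv.comp j).toLinearMap H0
      = f.toFun (LaurentPolynomial S)
          (LinearMap.rTensor M CL.toLinearMap x
            + (LaurentPolynomial.T (-1) : LaurentPolynomial S) • LinearMap.rTensor M CL.toLinearMap a) := by
    rw [hH0, f.isCompat (Polynomial S) (LaurentPolynomial S) (iv.comp j)]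
    congr 1
    rw [map_add, rTensor_algHom_smul, hivjX,
      rTensor_rTensor_algHom (R := R) (iv.comp j) CP CL hivjC x,
      rTensor_rTensor_algHom (R := R) (iv.comp j) CP CL hivjC a]
  -- coefficient identities
  have hc1 : (coeffL R S (d : ℤ)) ∘ₗ j.toLinearMap
      = LinearMap.restrictScalars R (Polynomial.lcoeff S d) := by
    apply LinearMap.ext; intro p
    show (Polynomial.toLaurent p).coeff ((d : ℕ) : ℤ) = p.coeff d
    rw [LaurentPolynomial.coeff_toLaurent]
    exact Finsupp.mapDomain_apply (f := Nat.castEmbedding) Nat.castEmbedding.injective _ d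
  have hc2 : (coeffL R S (d : ℤ)) ∘ₗ (LinearMap.mulLeft R ((LaurentPolynomial.T 1 : LaurentPolynomial S) ^ d))
      = coeffL R S 0 := by
    apply LinearMap.ext; intro l
    simp only [LinearMap.coe_comp, LinearMap.coe_restrictScalars, Function.comp_apply,
      LinearMap.mulLeft_apply, coeffL_apply]
    rw [LaurentPolynomial.T_pow, mul_one]
    have h := single_mul_apply' (S := S) ((d : ℕ) : ℤ) ((d : ℕ) : ℤ) l
    rw [sub_self] at h
    exact h
  have hc3 : (coeffL R S 0) ∘ₗ (iv.comp j).toLinearMap = ε.toLinearMap := by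
    apply LinearMap.ext; intro p
    show (LaurentPolynomial.invert (R := S) (Polynomial.toLaurent p)).coeff (0 : ℤ) = ε p
    rw [LaurentPolynomial.invert_apply, neg_zero,
      show (0 : ℤ) = ((0 : ℕ) : ℤ) from rfl, LaurentPolynomial.coeff_toLaurent,
      show ((0 : ℕ) : ℤ) = Nat.castEmbedding 0 from rfl,
      Finsupp.mapDomain_apply Nat.castEmbedding.injective]
    show p.coeff 0 = ε p
    rw [Polynomial.coeff_zero_eq_eval_zero]
    simp [hε]
  -- assemble
  calc f.toFun S x
      = LinearMap.rTensor N ε.toLinearMap H0 := he0.symm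
    _ = LinearMap.rTensor N ((coeffL R S 0) ∘ₗ (iv.comp j).toLinearMap) H0 := by rw [hc3]
    _ = LinearMap.rTensor N (coeffL R S 0) (LinearMap.rTensor N (iv.comp j).toLinearMap H0) := by
        rw [LinearMap.rTensor_comp, LinearMap.comp_apply]
    _ = LinearMap.rTensor N (coeffL R S 0)
          (f.toFun (LaurentPolynomial S)
            (LinearMap.rTensor M CL.toLinearMap x
              + (LaurentPolynomial.T (-1) : LaurentPolynomial S) • LinearMap.rTensor M CL.toLinearMap a)) := by rw [he2]
    _ = LinearMap.rTensor N ((coeffL R S (d : ℤ)) ∘ₗ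
          (LinearMap.mulLeft R ((LaurentPolynomial.T 1 : LaurentPolynomial S) ^ d)))
          (f.toFun (LaurentPolynomial S)
            (LinearMap.rTensor M CL.toLinearMap x
              + (LaurentPolynomial.T (-1) : LaurentPolynomial S) • LinearMap.rTensor M CL.toLinearMap a)) := by rw [hc2]
    _ = LinearMap.rTensor N (coeffL R S (d : ℤ))
          ((LaurentPolynomial.T 1 : LaurentPolynomial S) ^ d •
            f.toFun (LaurentPolynomial S)
              (LinearMap.rTensor M CL.toLinearMap x
                + (LaurentPolynomial.T (-1) : LaurentPolynomial S) • LinearMap.rTensor M CL.toLinearMap a)) := by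
        rw [LinearMap.rTensor_comp, LinearMap.comp_apply, ← smul_eq_rTensor_mulLeft]
    _ = LinearMap.rTensor N (coeffL R S (d : ℤ)) (LinearMap.rTensor N j.toLinearMap G) := by
        rw [he1]
    _ = LinearMap.rTensor N ((coeffL R S (d : ℤ)) ∘ₗ j.toLinearMap) G := by
        rw [LinearMap.rTensor_comp, LinearMap.comp_apply]
    _ = LinearMap.rTensor N (LinearMap.restrictScalars R (Polynomial.lcoeff S d)) G := by
        rw [hc1]

end Key

section Key2

variable {R : Type u} [CommRing R] {N : Type u} [AddCommGroup N] [Module R N]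
variable {S : Type u} [CommRing S] [Algebra R S]

set_option synthInstance.maxHeartbeats 1000000 in
set_option maxHeartbeats 1000000 in
lemma key_vanish (d : ℕ) (G : Polynomial S ⊗[R] N)
    (h0 : LinearMap.rTensor N
      (Ideal.Quotient.mkₐ R (Ideal.span {(Polynomial.X : Polynomial S) ^ (d + 1)})).toLinearMap
        G = 0) :
    LinearMap.rTensor N (LinearMap.restrictScalars R (Polynomial.lcoeff S d)) G = 0 := by
  have hker : ∀ y, (Ideal.Quotient.mkₐ R (Ideal.span {(Polynomial.X : Polynomial S) ^ (d + 1)})) y = 0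
      ↔ ∃ z, (Polynomial.X : Polynomial S) ^ (d + 1) * z = y := by
    intro y
    constructor
    · intro hy
      rw [Ideal.Quotient.mkₐ_eq_mk, Ideal.Quotient.eq_zero_iff_mem,
        Ideal.mem_span_singleton] at hy
      obtain ⟨r, rfl⟩ := hy
      exact ⟨r, rfl⟩
    · rintro ⟨z, rfl⟩
      rw [Ideal.Quotient.mkₐ_eq_mk, Ideal.Quotient.eq_zero_iff_mem, Ideal.mem_span_singleton]
      exact ⟨z, rfl⟩
  have hsurj : Function.Surjective
      ⇑(Ideal.Quotient.mkₐ R (Ideal.span {(Polynomial.X : Polynomial S) ^ (d + 1)})).toLinearMap := by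
    intro y
    obtain ⟨p, hp⟩ := Ideal.Quotient.mk_surjective y
    exact ⟨p, hp⟩
  obtain ⟨G', hG'⟩ := eq_smul_of_rTensor_eq_zero (M := N)
      (Ideal.Quotient.mkₐ R (Ideal.span {(Polynomial.X : Polynomial S) ^ (d + 1)}))
      ((Polynomial.X : Polynomial S) ^ (d + 1)) hker hsurj G h0
  rw [hG', smul_eq_rTensor_mulLeft, ← LinearMap.comp_apply, ← LinearMap.rTensor_comp]
  have hz : (LinearMap.restrictScalars R (Polynomial.lcoeff S d)) ∘ₗ
      (LinearMap.mulLeft R ((Polynomial.X : Polynomial S) ^ (d + 1))) = 0 := by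
    apply LinearMap.ext; intro p
    show ((Polynomial.X : Polynomial S) ^ (d + 1) * p).coeff d = 0
    rw [mul_comm, Polynomial.coeff_mul_X_pow']
    simp
  rw [hz, LinearMap.rTensor_zero, LinearMap.zero_apply]

end Key2

set_option synthInstance.maxHeartbeats 1000000 in
set_option maxHeartbeats 2000000 in
theorem stmt_2 (R : Type u) [CommRing R] (M N A : Type u)
    [AddCommGroup M] [Module R M] [AddCommGroup N] [Module R N]
    [Ring A] [Algebra R A]
    (g : PolyLaw R M A) (m : M) (hgm : IsUnit (g.ground m))
    (d : ℕ) (f : PolyLaw R M N) (hf : f.IsHomogeneous d)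
    (hvanish : ∀ (S : Type u) [CommRing S] [Algebra R S] (x : S ⊗[R] M),
      IsUnit (g.toFun S x) → f.toFun S x = 0) :
    ∀ (S : Type u) [CommRing S] [Algebra R S], ∀ x : S ⊗[R] M, f.toFun S x = 0 := by
  -- the ground value of `g` at `m` is a unit, transported to every algebra
  have hbase : IsUnit (g.toFun R ((1 : R) ⊗ₜ[R] m)) := by
    have h2 : IsUnit ((Algebra.TensorProduct.lid R A) (g.toFun R ((1 : R) ⊗ₜ[R] m))) := by
      have heq : ((Algebra.TensorProduct.lid R A) (g.toFun R ((1 : R) ⊗ₜ[R] m)))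
          = g.ground m := by
        rw [PolyLaw.ground, TensorProduct.lid_symm_apply]
        rfl
      rw [heq]; exact hgm
    have h3 := h2.map (Algebra.TensorProduct.lid R A).symm
    simpa using h3
  have hU : ∀ (S' : Type u) [CommRing S'] [Algebra R S'],
      IsUnit (g.toFun S' ((1 : S') ⊗ₜ[R] m)) := by
    intro S' _ _
    have hmap : ∀ y : R ⊗[R] A, LinearMap.rTensor A (Algebra.ofId R S').toLinearMap y
        = Algebra.TensorProduct.map (Algebra.ofId R S') (AlgHom.id R A) y := by
      intro y
      induction y using TensorProduct.induction_on with
      | zero => simp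
      | tmul r b => simp
      | add y z hy hz => simp [map_add, hy, hz]
    have hnat := g.isCompat R S' (Algebra.ofId R S') ((1 : R) ⊗ₜ[R] m)
    have h1 : LinearMap.rTensor M (Algebra.ofId R S').toLinearMap ((1 : R) ⊗ₜ[R] m)
        = (1 : S') ⊗ₜ[R] m := by
      rw [LinearMap.rTensor_tmul]
      congr 1
      simp
    rw [h1] at hnat
    rw [← hnat, hmap]
    exact hbase.map _
  intro S _ _ x
  rw [key_coeff f d hf x ((1 : S) ⊗ₜ[R] m)]
  apply key_vanish d
  -- notation
  set I : Ideal (Polynomial S) :=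
    Ideal.span {(Polynomial.X : Polynomial S) ^ (d + 1)} with hI
  set CP : S →ₐ[R] Polynomial S := IsScalarTower.toAlgHom R S (Polynomial S) with hCP
  set q : Polynomial S →ₐ[R] (Polynomial S ⧸ I) := Ideal.Quotient.mkₐ R I with hq
  set CT : S →ₐ[R] (Polynomial S ⧸ I) := q.comp CP with hCT
  set c : Polynomial S ⧸ I := Ideal.Quotient.mk I Polynomial.X with hc
  set aT : (Polynomial S ⧸ I) ⊗[R] M := LinearMap.rTensor M CT.toLinearMap ((1 : S) ⊗ₜ[R] m)
    with haT
  set z : (Polynomial S ⧸ I) ⊗[R] M :=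
    c • LinearMap.rTensor M CT.toLinearMap x + aT with hz
  -- naturality reduces the goal to `f.toFun _ z = 0`
  rw [f.isCompat (Polynomial S) (Polynomial S ⧸ I) q, map_add, rTensor_algHom_smul,
    rTensor_rTensor_algHom (R := R) q CP CT (fun s => rfl) x,
    rTensor_rTensor_algHom (R := R) q CP CT (fun s => rfl) ((1 : S) ⊗ₜ[R] m)]
  have hqX : q (Polynomial.X : Polynomial S) = c := by
    rw [hq, hc, Ideal.Quotient.mkₐ_eq_mk]
  rw [hqX, ← haT, ← hz]
  -- it remains to show `f.toFun _ z = 0`; we show `g.toFun _ z` is a unit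
  -- the evaluation map `π : Polynomial S ⧸ I → S`
  set ε : Polynomial S →ₐ[R] S :=
    ((Polynomial.aeval (0 : S) : Polynomial S →ₐ[S] S)).restrictScalars R with hε
  have hεI : ∀ p ∈ I, ε p = 0 := by
    intro p hp
    rw [hI, Ideal.mem_span_singleton] at hp
    obtain ⟨r, rfl⟩ := hp
    simp [hε]
  set π : (Polynomial S ⧸ I) →ₐ[R] S := Ideal.Quotient.liftₐ I ε hεI with hπ
  have hπmk : ∀ p : Polynomial S, π (Ideal.Quotient.mk I p) = ε p := by
    intro p
    rw [hπ, Ideal.Quotient.liftₐ_apply]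
    rfl
  have hπc : π c = 0 := by
    rw [hc, hπmk]
    simp [hε]
  have hπCT : ∀ s : S, π (CT s) = s := by
    intro s
    rw [hCT, AlgHom.comp_apply, hq, Ideal.Quotient.mkₐ_eq_mk, hπmk]
    simp [hε, hCP, IsScalarTower.toAlgHom_apply, Polynomial.algebraMap_eq]
  have hεcoeff : ∀ p : Polynomial S, ε p = p.coeff 0 := by
    intro p
    rw [Polynomial.coeff_zero_eq_eval_zero]
    simp [hε, Polynomial.coe_aeval_eq_eval]
  -- kernel and surjectivity of π
  have hkerπ : ∀ y : Polynomial S ⧸ I, π y = 0 ↔ ∃ z', c * z' = y := by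
    intro y
    constructor
    · intro hy
      obtain ⟨p, rfl⟩ := Ideal.Quotient.mk_surjective (I := I) y
      rw [hπmk, hεcoeff] at hy
      obtain ⟨r, rfl⟩ := Polynomial.X_dvd_iff.mpr hy
      exact ⟨Ideal.Quotient.mk I r, by rw [hc, ← map_mul]⟩
    · rintro ⟨z', rfl⟩
      rw [map_mul, hπc, zero_mul]
  have hsurjπ : Function.Surjective ⇑π.toLinearMap := by
    intro s
    exact ⟨CT s, by simpa using hπCT s⟩
  -- the element `w = g z - g (1 ⊗ m)` dies in S, hence is a multiple of c
  have hwker : LinearMap.rTensor A π.toLinearMap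
      (g.toFun (Polynomial S ⧸ I) z
        - g.toFun (Polynomial S ⧸ I) ((1 : Polynomial S ⧸ I) ⊗ₜ[R] m)) = 0 := by
    rw [map_sub, g.isCompat (Polynomial S ⧸ I) S π z,
      g.isCompat (Polynomial S ⧸ I) S π ((1 : Polynomial S ⧸ I) ⊗ₜ[R] m)]
    have h1 : LinearMap.rTensor M π.toLinearMap z = (1 : S) ⊗ₜ[R] m := by
      rw [hz, map_add, rTensor_algHom_smul, hπc, zero_smul, zero_add, haT,
        rTensor_rTensor_algHom (R := R) π CT (AlgHom.id R S) hπCT ((1 : S) ⊗ₜ[R] m)]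
      rw [show (AlgHom.id R S).toLinearMap = LinearMap.id from rfl, LinearMap.rTensor_id,
        LinearMap.id_apply]
    have h2 : LinearMap.rTensor M π.toLinearMap ((1 : Polynomial S ⧸ I) ⊗ₜ[R] m)
        = (1 : S) ⊗ₜ[R] m := by
      rw [LinearMap.rTensor_tmul]
      congr 1
      simp
    rw [h1, h2, sub_self]
  obtain ⟨v, hv⟩ := eq_smul_of_rTensor_eq_zero (M := A) π c hkerπ hsurjπ _ hwker
  -- nilpotency of c
  have hck : c ^ (d + 1) = 0 := by
    rw [hc, ← map_pow, Ideal.Quotient.eq_zero_iff_mem]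
    exact Ideal.subset_span rfl
  -- g z is a unit
  have hunitz : IsUnit (g.toFun (Polynomial S ⧸ I) z) := by
    have hdecomp : g.toFun (Polynomial S ⧸ I) z
        = g.toFun (Polynomial S ⧸ I) ((1 : Polynomial S ⧸ I) ⊗ₜ[R] m)
          + @algebraMap (Polynomial S ⧸ I) ((Polynomial S ⧸ I) ⊗[R] A) _ _
            Algebra.TensorProduct.leftAlgebra c * v := by
      rw [← Algebra.smul_def, ← hv]
      abel
    rw [hdecomp]
    refine isUnit_add_central_mul (hU (Polynomial S ⧸ I)) _ v
      (fun b => Algebra.commutes c b) ⟨d + 1, ?_⟩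
    rw [← map_pow, hck, map_zero]
  rw [hvanish (Polynomial S ⧸ I) z hunitz]
end

section
/- Let R be a commutative ring and let C be a composition algebra over R with norm n_C and trace Tr_C. Then for every x ∈ C, x·x − Tr_C(x) • x + n_C(x) • 1_C = 0. -/
/-!
STATEMENT 9: Let R be a commutative ring and let C be a composition algebra over R with
norm n_C and trace Tr_C.  Then for every x ∈ C,
  x·x − Tr_C(x) • x + n_C(x) • 1_C = 0.
-/

/-- The conditions making a quadratic form `n` on a unital non-necessarily-associative
algebra `C` (finitely generated projective as an `R`-module) the norm of a composition
algebra: multiplicativity, `n 1 = 1`, and regularity of the bilinearization. -/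
def IsCompositionNorm (R : Type*) [CommRing R] (C : Type*) [NonAssocRing C]
    [Module R C] [SMulCommClass R C C] [IsScalarTower R C C]
    (n : QuadraticForm R C) : Prop :=
  (∀ x y : C, n (x * y) = n x * n y) ∧ n 1 = 1 ∧
    Function.Bijective (QuadraticMap.polarBilin n)

theorem stmt_9 (R : Type*) [CommRing R] (C : Type*) [NonAssocRing C]
    [Module R C] [SMulCommClass R C C] [IsScalarTower R C C]
    [Module.Finite R C] [Module.Projective R C]
    (n : QuadraticForm R C) (hn : IsCompositionNorm R C n) (x : C) :
    x * x - QuadraticMap.polar n x 1 • x + n x • (1 : C) = 0 := by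
  obtain ⟨hmul, hone, hbij⟩ := hn
  -- (A)  b(x·y, x·z) = n x · b(y, z)
  have hA : ∀ x y z : C, QuadraticMap.polar n (x * y) (x * z)
      = n x * QuadraticMap.polar n y z := by
    intro x y z
    simp only [QuadraticMap.polar, ← mul_add, hmul]
    ring
  -- (B)  b(x·y, w·z) + b(w·y, x·z) = b(x,w)·b(y,z)
  have hB : ∀ x w y z : C, QuadraticMap.polar n (x * y) (w * z)
      + QuadraticMap.polar n (w * y) (x * z)
      = QuadraticMap.polar n x w * QuadraticMap.polar n y z := by
    intro x w y z
    have h := hA (x + w) y z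
    rw [add_mul, add_mul, QuadraticMap.polar_add_left, QuadraticMap.polar_add_right,
      QuadraticMap.polar_add_right] at h
    have hnxw : n (x + w) = QuadraticMap.polar n x w + n x + n w := by
      simp [QuadraticMap.polar]; ring
    rw [hA x y z, hA w y z, hnxw] at h
    linear_combination h
  -- b(x², z) = b(x,1)·b(x,z) − n x · b(1,z)
  have key : ∀ z : C, QuadraticMap.polar n (x * x) z
      = QuadraticMap.polar n x 1 * QuadraticMap.polar n x z
        - n x * QuadraticMap.polar n 1 z := by
    intro z
    have h1 := hB x 1 x z
    rw [one_mul, one_mul] at h1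
    have h2 := hA x 1 z
    rw [mul_one] at h2
    linear_combination h1 - h2
  apply hbij.injective
  rw [map_zero]
  ext z
  simp only [QuadraticMap.polarBilin_apply_apply, LinearMap.zero_apply]
  rw [QuadraticMap.polar_add_left, QuadraticMap.polar_sub_left,
    QuadraticMap.polar_smul_left, QuadraticMap.polar_smul_left, key z]
  simp only [smul_eq_mul]
  ring
end

section
/- Let R be a commutative ring and let C be a unital not-necessarily-associative R-algebra that is finitely generated projective as an R-module. If n and n' are two quadratic forms on C each of which makes C a composition algebra over R (that is, each is multiplicative, takes the value 1 at 1_C, and has regular bilinearization), then n = n'. In other words, the norm of a composition algebra is uniquely determined by its algebra structure. -/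
open QuadraticMap

section Aux


set_option linter.unusedSectionVars false
variable {R : Type*} [CommRing R] {C : Type*} [NonAssocRing C]
    [Module R C] [SMulCommClass R C C] [IsScalarTower R C C]

private lemma polar_expand (q : QuadraticForm R C) (a b : C) :
    q (a + b) = q a + q b + polar q a b := by
  simp [QuadraticMap.polar]

private lemma aux_li (q : QuadraticForm R C) (hq : ∀ x y : C, q (x * y) = q x * q y)
    (x y w : C) : polar q (x * y) (x * w) = q x * polar q y w := by
  simp only [QuadraticMap.polar, ← mul_add, hq]; ring

private lemma aux_ri (q : QuadraticForm R C) (hq : ∀ x y : C, q (x * y) = q x * q y)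
    (x z y : C) : polar q (x * y) (z * y) = polar q x z * q y := by
  simp only [QuadraticMap.polar, ← add_mul, hq]; ring

private lemma aux_four (q : QuadraticForm R C) (hq : ∀ x y : C, q (x * y) = q x * q y)
    (x y z w : C) :
    polar q (x * y) (z * w) + polar q (z * y) (x * w) = polar q x z * polar q y w := by
  have e1 : (x + z) * (y + w) = (x * y + z * w) + (x * w + z * y) := by
    simp only [add_mul, mul_add]; abel
  have H : q ((x * y + z * w) + (x * w + z * y)) = q (x + z) * q (y + w) := by
    rw [← e1, hq]
  rw [polar_expand q (x * y + z * w) (x * w + z * y), polar_expand q (x * y) (z * w),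
      polar_expand q (x * w) (z * y), polar_expand q x z, polar_expand q y w] at H
  simp only [polar_add_left, polar_add_right] at H
  rw [aux_li q hq x y w, aux_ri q hq x z y, aux_ri q hq z x w, aux_li q hq z w y,
      polar_comm q z x, polar_comm q w y, hq x y, hq z w, hq x w, hq z y] at H
  rw [polar_comm q (z * y) (x * w)]
  linear_combination H

private lemma aux_main (q : QuadraticForm R C) (hq : ∀ x y : C, q (x * y) = q x * q y)
    (hreg : Function.Bijective (polarBilin q)) (x : C) :
    x * x = polar q x 1 • x - q x • (1 : C) := by
  apply hreg.injective
  apply LinearMap.ext; intro zz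
  simp only [_root_.map_sub, _root_.map_smul, LinearMap.sub_apply, LinearMap.smul_apply,
    polarBilin_apply_apply, smul_eq_mul]
  have h4 := aux_four q hq x x 1 zz
  rw [one_mul, one_mul] at h4
  have h5 := aux_li q hq x 1 zz
  rw [mul_one] at h5
  linear_combination h4 - h5

end Aux


theorem stmt_10 (R : Type*) [CommRing R] (C : Type*) [NonAssocRing C]
    [Module R C] [SMulCommClass R C C] [IsScalarTower R C C]
    [Module.Finite R C] [Module.Projective R C]
    (n n' : QuadraticForm R C)
    (hn : IsCompositionNorm R C n) (hn' : IsCompositionNorm R C n') :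
    n = n' := by
  obtain ⟨hmul, hone, hreg⟩ := hn
  obtain ⟨hmul', hone', hreg'⟩ := hn'
  have key : ∀ x : C, (polar n x 1 - polar n' x 1) • x = (n x - n' x) • (1 : C) := by
    intro x
    have h1 := aux_main n hmul hreg x
    have h2 := aux_main n' hmul' hreg' x
    have h3 : polar n x 1 • x - n x • (1:C) = polar n' x 1 • x - n' x • (1:C) := by
      rw [← h1, ← h2]
    linear_combination (norm := module) h3
  have lin : ∀ x y : C,
      (polar n x 1 - polar n' x 1) • y + (polar n y 1 - polar n' y 1) • x
        = ((n (x+y) - n' (x+y)) - (n x - n' x) - (n y - n' y)) • (1 : C) := by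
    intro x y
    have k1 := key x
    have k2 := key y
    have k3 := key (x + y)
    rw [polar_add_left, polar_add_left] at k3
    linear_combination (norm := module) k3 - k1 - k2
  ext x₀
  rw [← sub_eq_zero]
  apply eq_zero_of_localization
  intro J hJ
  letI R' := Localization.AtPrime J
  letI C' := LocalizedModule J.primeCompl C
  let ι : C →ₗ[R] C' := LocalizedModule.mkLinearMap J.primeCompl C
  letI : Module.Finite R' C' := Module.Finite.of_isLocalizedModule J.primeCompl ι
  letI : Module.Projective R' C' := Module.projective_of_isLocalizedModule J.primeCompl ι
  letI : Module.FinitePresentation R' C' := Module.finitePresentation_of_projective R' C'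
  letI : Module.Free R' C' := Module.free_of_flat_of_isLocalRing
  let φ : R →+* R' := algebraMap R R'
  have hsmul : ∀ (r : R) (ξ : C'), φ r • ξ = r • ξ := fun r ξ => algebraMap_smul R' r ξ
  -- n sends J•⊤ into J
  have hnJ : ∀ z ∈ (J • ⊤ : Submodule R C), n z ∈ J ∧ ∀ y : C, polar n z y ∈ J := by
    intro z hz
    refine Submodule.smul_induction_on hz ?_ ?_
    · intro r hr c _
      constructor
      · rw [QuadraticMap.map_smul, smul_eq_mul]
        exact Ideal.mul_mem_right _ _ (Ideal.mul_mem_right _ _ hr)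
      · intro y
        rw [polar_smul_left, smul_eq_mul]
        exact Ideal.mul_mem_right _ _ hr
    · rintro a b ⟨ha1, ha2⟩ ⟨hb1, hb2⟩
      refine ⟨?_, fun y => ?_⟩
      · have h : n (a + b) = n a + n b + polar n a b := by simp [QuadraticMap.polar]
        rw [h]; exact Ideal.add_mem _ (Ideal.add_mem _ ha1 hb1) (ha2 b)
      · rw [polar_add_left]; exact Ideal.add_mem _ (ha2 y) (hb2 y)
  -- kernel of ι
  have hker : ∀ z : C, ι z = 0 → ∃ w : J.primeCompl, (w : R) • z = 0 := by
    intro z hz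
    have h : LocalizedModule.mk z (1 : J.primeCompl)
        = LocalizedModule.mk (0 : C) (1 : J.primeCompl) := by
      rw [LocalizedModule.zero_mk]; exact hz
    rw [LocalizedModule.mk_eq] at h
    obtain ⟨u, hu⟩ := h
    refine ⟨u, ?_⟩
    simpa [Submonoid.smul_def] using hu
  -- transfer of maximal-ideal-smul membership
  have htrans : ∀ ξ : C',
      ξ ∈ (IsLocalRing.maximalIdeal R' • ⊤ : Submodule R' C') →
      ∃ (u : J.primeCompl) (z : C), z ∈ (J • ⊤ : Submodule R C) ∧ (u : R) • ξ = ι z := by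
    intro ξ hξ
    refine Submodule.smul_induction_on hξ ?_ ?_
    · intro r hr η _
      obtain ⟨⟨a, v⟩, rfl⟩ := IsLocalization.mk'_surjective J.primeCompl r
      have ha : a ∈ J := by
        by_contra hc
        exact (IsLocalRing.mem_maximalIdeal _).mp hr
          ((IsLocalization.AtPrime.isUnit_mk'_iff R' J a v).mpr hc)
      induction η using LocalizedModule.induction_on with
      | h yy ss =>
        refine ⟨v * ss, a • yy, Submodule.smul_mem_smul ha trivial, ?_⟩
        dsimp only
        rw [← Localization.mk_eq_mk', LocalizedModule.mk_smul_mk, LocalizedModule.smul'_mk,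
          ← Submonoid.smul_def, LocalizedModule.mk_cancel]
        rfl
    · rintro ξ₁ ξ₂ ⟨u₁, z₁, hz₁, e₁⟩ ⟨u₂, z₂, hz₂, e₂⟩
      refine ⟨u₁ * u₂, (u₂ : R) • z₁ + (u₁ : R) • z₂,
        Submodule.add_mem _ (Submodule.smul_mem _ _ hz₁) (Submodule.smul_mem _ _ hz₂), ?_⟩
      have : ((u₁ * u₂ : J.primeCompl) : R) • (ξ₁ + ξ₂)
          = (u₂ : R) • ((u₁ : R) • ξ₁) + (u₁ : R) • ((u₂ : R) • ξ₂) := by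
        rw [Submonoid.coe_mul]; module
      rw [this, e₁, e₂, ← map_smul ι, ← map_smul ι, ← map_add ι]
  -- 1 is unimodular
  have hun : ι 1 ∉ (IsLocalRing.maximalIdeal R' • ⊤ : Submodule R' C') := by
    intro h
    obtain ⟨u, z, hz, he⟩ := htrans _ h
    have h0 : ι ((u : R) • 1 - z) = 0 := by rw [_root_.map_sub, _root_.map_smul, he, sub_self]
    obtain ⟨w, hw⟩ := hker _ h0
    have h1 : ((w : R) * (u : R)) • (1 : C) = (w : R) • z := by
      rw [smul_sub, sub_eq_zero] at hw
      rw [mul_smul]; exact hw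
    have h2 : n (((w : R) * (u : R)) • (1 : C)) ∈ J := by
      rw [h1]; exact (hnJ _ (Submodule.smul_mem _ _ hz)).1
    rw [QuadraticMap.map_smul, hone, smul_eq_mul, mul_one] at h2
    have h3 : (w : R) * (u : R) ∈ J := (hJ.isPrime.mem_or_mem h2).elim id id
    exact (w * u).2 (by simpa using h3)
  -- basis
  let b := Module.Free.chooseBasis R' C'
  have hex : ∃ i, b.repr (ι 1) i ∉ IsLocalRing.maximalIdeal R' := by
    by_contra hall
    push_neg at hall
    apply hun
    rw [← b.sum_repr (ι 1)]
    exact Submodule.sum_mem _ fun i _ => Submodule.smul_mem_smul (hall i) trivial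
  obtain ⟨i₀, hi₀⟩ := hex
  have hci₀ : IsUnit (b.repr (ι 1) i₀) := by
    rwa [IsLocalRing.mem_maximalIdeal, mem_nonunits_iff, not_not] at hi₀
  -- localized key and lin
  have keyL : ∀ x : C, φ (polar n x 1 - polar n' x 1) • ι x = φ (n x - n' x) • ι 1 := by
    intro x
    rw [hsmul, hsmul, ← _root_.map_smul, ← _root_.map_smul, key x]
  have linL : ∀ x y : C, φ (polar n x 1 - polar n' x 1) • ι y
        + φ (polar n y 1 - polar n' y 1) • ι x
      = φ ((n (x+y) - n' (x+y)) - (n x - n' x) - (n y - n' y)) • ι 1 := by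
    intro x y
    rw [hsmul, hsmul, hsmul, ← _root_.map_smul ι, ← _root_.map_smul ι, ← _root_.map_smul ι, ← _root_.map_add ι, lin x y]
  have coordEq : ∀ (ρ : R') (ξ : C') (σ : R') (η : C'), ρ • ξ = σ • η →
      ∀ i, ρ * b.repr ξ i = σ * b.repr η i := by
    intro ρ ξ σ η h i
    have h2 := congrArg (fun ζ => b.repr ζ i) h
    simpa [_root_.map_smul, Finsupp.smul_apply, smul_eq_mul] using h2
  by_cases hsing : ∀ j, j = i₀
  · -- rank-one case
    have hbe : ∀ ξ : C', ξ = b.repr ξ i₀ • b i₀ := by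
      intro ξ
      have h := b.sum_repr ξ
      rw [Fintype.sum_eq_single i₀ (fun j hj => absurd (hsing j) hj)] at h
      exact h.symm
    have hρ : ι x₀ = (b.repr (ι x₀) i₀ * ↑hci₀.unit⁻¹) • ι 1 := by
      calc ι x₀ = b.repr (ι x₀) i₀ • b i₀ := hbe _
        _ = (b.repr (ι x₀) i₀ * ↑hci₀.unit⁻¹ * b.repr (ι 1) i₀) • b i₀ := by
              rw [mul_assoc, IsUnit.val_inv_mul, mul_one]
        _ = (b.repr (ι x₀) i₀ * ↑hci₀.unit⁻¹) • (b.repr (ι 1) i₀ • b i₀) := by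
              rw [mul_smul]
        _ = (b.repr (ι x₀) i₀ * ↑hci₀.unit⁻¹) • ι 1 := by rw [← hbe (ι 1)]
    obtain ⟨⟨a, v⟩, hav⟩ := IsLocalization.mk'_surjective J.primeCompl
      (b.repr (ι x₀) i₀ * (↑hci₀.unit⁻¹ : R'))
    have hspec : φ (v : R) * (b.repr (ι x₀) i₀ * ↑hci₀.unit⁻¹) = φ a := by
      rw [← hav]; exact IsLocalization.mk'_spec' R' a v
    have h6 : ι ((v : R) • x₀ - a • (1 : C)) = 0 := by
      rw [_root_.map_sub, _root_.map_smul, _root_.map_smul, ← hsmul, ← hsmul, hρ,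
        smul_smul, hspec, sub_self]
    obtain ⟨w, hw⟩ := hker _ h6
    have h7 : ((w : R) * (v : R)) • x₀ = ((w : R) * a) • (1 : C) := by
      rw [smul_sub, sub_eq_zero] at hw
      rw [mul_smul, mul_smul]; exact hw
    have h8 : (((w:R)*(v:R))*((w:R)*(v:R))) * (n x₀ - n' x₀) = 0 := by
      have e1 : n (((w:R)*(v:R)) • x₀) = n (((w:R)*a) • (1:C)) := by rw [h7]
      have e2 : n' (((w:R)*(v:R)) • x₀) = n' (((w:R)*a) • (1:C)) := by rw [h7]
      rw [QuadraticMap.map_smul, QuadraticMap.map_smul, hone, smul_eq_mul, smul_eq_mul,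
        mul_one] at e1
      rw [QuadraticMap.map_smul, QuadraticMap.map_smul, hone', smul_eq_mul, smul_eq_mul,
        mul_one] at e2
      linear_combination e1 - e2
    have h9 : φ ((((w:R)*(v:R))*((w:R)*(v:R)))) * φ (n x₀ - n' x₀) = 0 := by
      rw [← map_mul, h8, map_zero]
    have hu : IsUnit (φ (((w:R)*(v:R))*((w:R)*(v:R)))) := by
      simpa using IsLocalization.map_units R' ((w*v)*(w*v) : J.primeCompl)
    exact (IsUnit.mul_right_eq_zero hu).mp h9
  · push_neg at hsing
    obtain ⟨j, hj⟩ := hsing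
    obtain ⟨⟨y, u⟩, hyu⟩ := IsLocalizedModule.mk'_surjective J.primeCompl ι (b j)
    have hyu' : ι y = (u : R) • b j := by
      rw [← hyu]
      have := IsLocalizedModule.mk'_cancel' ι y u
      rw [Submonoid.smul_def] at this
      exact this.symm
    have huu : IsUnit (φ (u : R)) := IsLocalization.map_units R' u
    have E1 := keyL y
    rw [hyu', ← hsmul, smul_smul] at E1
    have A1 := coordEq _ _ _ _ E1 i₀
    simp only [Module.Basis.repr_self, Finsupp.single_eq_of_ne' hj, mul_zero] at A1
    have hmy : φ (n y - n' y) = 0 :=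
      (IsUnit.mul_left_eq_zero hci₀).mp A1.symm
    have A2 := coordEq _ _ _ _ E1 j
    simp only [Module.Basis.repr_self, Finsupp.single_eq_same, mul_one, hmy, zero_mul] at A2
    have hsy : φ (polar n y 1 - polar n' y 1) = 0 := (IsUnit.mul_left_eq_zero huu).mp A2
    have E2 := linL x₀ y
    rw [hsy, zero_smul, add_zero, hyu', ← hsmul, smul_smul] at E2
    have B1 := coordEq _ _ _ _ E2 i₀
    simp only [Module.Basis.repr_self, Finsupp.single_eq_of_ne' hj, mul_zero] at B1
    have hP : φ ((n (x₀ + y) - n' (x₀ + y)) - (n x₀ - n' x₀) - (n y - n' y)) = 0 :=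
      (IsUnit.mul_left_eq_zero hci₀).mp B1.symm
    have B2 := coordEq _ _ _ _ E2 j
    simp only [Module.Basis.repr_self, Finsupp.single_eq_same, mul_one, hP, zero_mul] at B2
    have hsx : φ (polar n x₀ 1 - polar n' x₀ 1) = 0 := (IsUnit.mul_left_eq_zero huu).mp B2
    have E3 := keyL x₀
    rw [hsx, zero_smul] at E3
    have E3' : φ (n x₀ - n' x₀) • ι 1 = (0 : R') • ι 1 := by
      rw [zero_smul]; exact E3.symm
    have C1 := coordEq _ _ _ _ E3' i₀
    rw [zero_mul] at C1
    exact (IsUnit.mul_left_eq_zero hci₀).mp C1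
end
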